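/- arXiv:2008.08864 — 2 statements merged into one kernel-verified Lean document; each statement's English description precedes it below -/
import Mathlib

section
/- For every integer n ≥ 2, the assignment (i,j,k) ↦ b(i,j,k) is a bijection from the set of integer triples (i,j,k) satisfying 1 ≤ i, j ≤ n−1 and 0 ≤ k ≤ min{i−1, j−1, n−1−i, n−1−j} onto the set B_n of bigrassmannian permutations in S_n. -/
namespace Paper

/-- The simple transposition `s_i = (i, i+1)` (1-based) in `S_n`, realized as a
permutation of `Fin n`. For `i` outside `{1, …, n-1}` we set `s i = 1`. -/
def s (n i : ℕ) : Equiv.Perm (Fin n) :=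
  if h : 1 ≤ i ∧ i < n then Equiv.swap ⟨i - 1, by omega⟩ ⟨i, by omega⟩ else 1

/-- The length of a permutation: its number of inversions. -/
def len {n : ℕ} (w : Equiv.Perm (Fin n)) : ℕ :=
  (Finset.univ.filter (fun p : Fin n × Fin n => p.1 < p.2 ∧ w p.2 < w p.1)).card

/-- `i` is a left descent of `w` if `1 ≤ i ≤ n-1` and `ℓ(s_i w) < ℓ(w)`. -/
def IsLeftDescent {n : ℕ} (w : Equiv.Perm (Fin n)) (i : ℕ) : Prop :=
  1 ≤ i ∧ i ≤ n - 1 ∧ len (s n i * w) < len w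

/-- `i` is a right descent of `w` if `1 ≤ i ≤ n-1` and `ℓ(w s_i) < ℓ(w)`. -/
def IsRightDescent {n : ℕ} (w : Equiv.Perm (Fin n)) (i : ℕ) : Prop :=
  1 ≤ i ∧ i ≤ n - 1 ∧ len (w * s n i) < len w

/-- A permutation is bigrassmannian if it has exactly one left descent and
exactly one right descent. -/
def Bigrassmannian {n : ℕ} (w : Equiv.Perm (Fin n)) : Prop :=
  (∃! i, IsLeftDescent w i) ∧ (∃! j, IsRightDescent w j)

/-- One step of the Bruhat order: `w ⋖ t * w` for a transposition `t`
with `ℓ(w) < ℓ(t w)`. -/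
def BruhatStep {n : ℕ} (w w' : Equiv.Perm (Fin n)) : Prop :=
  ∃ a b : Fin n, a ≠ b ∧ w' = Equiv.swap a b * w ∧ len w < len w'

/-- The Bruhat order on `S_n`: the partial order generated by `w < tw` whenever
`t` is a transposition and `ℓ(w) < ℓ(tw)`. -/
def BruhatLE {n : ℕ} : Equiv.Perm (Fin n) → Equiv.Perm (Fin n) → Prop :=
  Relation.ReflTransGen BruhatStep

/-- Strict Bruhat order. -/
def BruhatLT {n : ℕ} (x y : Equiv.Perm (Fin n)) : Prop :=
  BruhatLE x y ∧ x ≠ y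

/-- The product `s_a s_{a+1} ⋯ s_b` of consecutive simple transpositions. -/
def ascRun (n a b : ℕ) : Equiv.Perm (Fin n) :=
  ((List.range (b + 1 - a)).map (fun t => s n (a + t))).prod

/-- For `i ≤ j`: `b(i,j,k) = (s_i ⋯ s_{j+k})(s_{i-1} ⋯ s_{j+k-1}) ⋯ (s_{i-k} ⋯ s_j)`. -/
def bAux (n i j k : ℕ) : Equiv.Perm (Fin n) :=
  ((List.range (k + 1)).map (fun m => ascRun n (i - m) (j + k - m))).prod

/-- The bigrassmannian permutation `b(i,j,k)`; for `j < i` it is `b(j,i,k)⁻¹`. -/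
def b (n i j k : ℕ) : Equiv.Perm (Fin n) :=
  if i ≤ j then bAux n i j k else (bAux n j i k)⁻¹

/-- The value `w(i)` of a permutation `w ∈ S_n` at `i ∈ {1, …, n}`, 1-based. -/
def act {n : ℕ} (w : Equiv.Perm (Fin n)) (i : ℕ) : ℕ :=
  if h : 1 ≤ i ∧ i ≤ n then ((w ⟨i - 1, by omega⟩ : Fin n) : ℕ) + 1 else i

/-- The essential set of a permutation `w ∈ S_n`. -/
def Ess {n : ℕ} (w : Equiv.Perm (Fin n)) : Set (ℕ × ℕ) :=
  {p | 1 ≤ p.1 ∧ p.1 ≤ n - 1 ∧ 1 ≤ p.2 ∧ p.2 ≤ n - 1 ∧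
    p.1 < act w⁻¹ p.2 ∧ p.2 < act w p.1 ∧
    act w (p.1 + 1) ≤ p.2 ∧ act w⁻¹ (p.2 + 1) ≤ p.1}

/-- The rank function `r_w(i,j) = |{k ≤ i : w(k) ≤ j}|` (1-based). -/
def rnk {n : ℕ} (w : Equiv.Perm (Fin n)) (i j : ℕ) : ℕ :=
  ((Finset.Icc 1 i).filter (fun k => act w k ≤ j)).card

/-- The co-rank function `t_w(i,j) = min{i,j} - r_w(i,j)`. -/
def cork {n : ℕ} (w : Equiv.Perm (Fin n)) (i j : ℕ) : ℕ :=
  min i j - rnk w i j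

/-- The set of bigrassmannian permutations `y ≤ w` in Bruhat order. -/
def BSet {n : ℕ} (w : Equiv.Perm (Fin n)) : Set (Equiv.Perm (Fin n)) :=
  {y | Bigrassmannian y ∧ BruhatLE y w}

/-- The set of Bruhat-maximal elements of `BSet w`. -/
def BM {n : ℕ} (w : Equiv.Perm (Fin n)) : Set (Equiv.Perm (Fin n)) :=
  {y ∈ BSet w | ∀ z ∈ BSet w, BruhatLE y z → z = y}


-- Section A: ef and pv basics
def ef (lo p hi x : ℕ) : ℕ :=
  if lo ≤ x ∧ x ≤ p then x + (hi - p) else if p < x ∧ x ≤ hi then x - (p+1-lo) else x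

lemma ef_lt {n lo p hi x : ℕ} (h : hi < n) (hx : x < n) : ef lo p hi x < n := by
  unfold ef; split_ifs <;> omega

lemma ef_ef {lo p hi q x : ℕ} (h1 : lo ≤ p) (h2 : p < hi) (hq : q = lo + hi - p - 1) :
    ef lo p hi (ef lo q hi x) = x := by
  unfold ef; split_ifs <;> omega

def pv {n : ℕ} (w : Equiv.Perm (Fin n)) (t : ℕ) : ℕ :=
  if h : t < n then ((w ⟨t, h⟩ : Fin n) : ℕ) else t

lemma pv_apply {n : ℕ} (w : Equiv.Perm (Fin n)) {t : ℕ} (h : t < n) :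
    pv w t = ((w ⟨t, h⟩ : Fin n) : ℕ) := by simp [pv, h]

lemma pv_lt {n : ℕ} (w : Equiv.Perm (Fin n)) {t : ℕ} (h : t < n) : pv w t < n := by
  rw [pv_apply w h]; exact (w ⟨t, h⟩).isLt

lemma pv_inj {n : ℕ} (w : Equiv.Perm (Fin n)) {t u : ℕ} (ht : t < n) (hu : u < n)
    (h : pv w t = pv w u) : t = u := by
  rw [pv_apply w ht, pv_apply w hu] at h
  have := w.injective (Fin.ext h)
  exact congrArg Fin.val this

lemma pv_inv {n : ℕ} (w : Equiv.Perm (Fin n)) {t : ℕ} (h : t < n) :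
    pv w⁻¹ (pv w t) = t := by
  rw [pv_apply w h, pv_apply w⁻¹ (w ⟨t, h⟩).isLt]
  simp

lemma pv_inv_eq {n : ℕ} (w : Equiv.Perm (Fin n)) {t u : ℕ} (ht : t < n) (hu : u < n)
    (h : pv w t = u) : pv w⁻¹ u = t := by subst h; exact pv_inv w ht

-- Section B/C: s and len lemmas
lemma s_eq_swap {n m : ℕ} (hm1 : 1 ≤ m) (hm2 : m < n) :
    s n m = Equiv.swap (⟨m - 1, by omega⟩ : Fin n) ⟨m, hm2⟩ := by
  unfold s; rw [dif_pos ⟨hm1, hm2⟩]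

lemma s_inv {n m : ℕ} : (s n m)⁻¹ = s n m := by
  unfold s; split_ifs with h
  · exact Equiv.swap_inv _ _
  · rfl

lemma s_mul_s {n m : ℕ} : s n m * s n m = 1 := by
  have := s_inv (n := n) (m := m)
  calc s n m * s n m = s n m * (s n m)⁻¹ := by rw [s_inv]
    _ = 1 := mul_inv_cancel _

lemma len_inv {n : ℕ} (w : Equiv.Perm (Fin n)) : len w⁻¹ = len w := by
  unfold len
  apply Finset.card_bij' (i := fun pq _ => (w⁻¹ pq.2, w⁻¹ pq.1)) (j := fun pq _ => (w pq.2, w pq.1))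
  · intro pq h
    simp only [Finset.mem_filter, Finset.mem_univ, true_and] at h ⊢
    refine ⟨h.2, ?_⟩
    simpa using h.1
  · intro pq h
    simp only [Finset.mem_filter, Finset.mem_univ, true_and] at h ⊢
    refine ⟨h.2, ?_⟩
    simpa using h.1
  · intro pq h; simp
  · intro pq h; simp

lemma swap_mono {n m : ℕ} (hm1 : 1 ≤ m) (hm2 : m < n) (p q : Fin n) (hpq : p < q)
    (hne : ¬(p = (⟨m - 1, by omega⟩ : Fin n) ∧ q = ⟨m, hm2⟩)) :
    Equiv.swap (⟨m - 1, by omega⟩ : Fin n) ⟨m, hm2⟩ p < Equiv.swap (⟨m - 1, by omega⟩ : Fin n) ⟨m, hm2⟩ q := by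
  rw [Equiv.swap_apply_def, Equiv.swap_apply_def]
  rw [Fin.lt_def] at hpq ⊢
  simp only [Fin.ext_iff] at hne ⊢
  have h1 := p.isLt
  have h2 := q.isLt
  split_ifs <;> simp -failIfUnchanged only [Fin.ext_iff, Fin.lt_def] at * <;> omega

lemma len_mul_s {n m : ℕ} (w : Equiv.Perm (Fin n)) (hm1 : 1 ≤ m) (hm2 : m < n)
    (h : pv w (m - 1) < pv w m) : len (w * s n m) = len w + 1 := by
  classical
  set a : Fin n := ⟨m - 1, by omega⟩ with ha
  set bb : Fin n := ⟨m, hm2⟩ with hbb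
  have hs : s n m = Equiv.swap a bb := s_eq_swap hm1 hm2
  have hab : a < bb := by rw [Fin.lt_def]; simp [ha, hbb]; omega
  have hval : (w a : ℕ) < w bb := by
    rw [pv_apply w (show m - 1 < n by omega), pv_apply w hm2] at h; exact h
  set I : Equiv.Perm (Fin n) → Finset (Fin n × Fin n) :=
    fun u => Finset.univ.filter (fun p : Fin n × Fin n => p.1 < p.2 ∧ u p.2 < u p.1) with hI
  have hlen : ∀ u : Equiv.Perm (Fin n), len u = (I u).card := fun u => rfl
  have hmulap : ∀ x, (w * s n m) x = w (Equiv.swap a bb x) := by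
    intro x; rw [hs]; rfl
  have habI : (a, bb) ∈ I (w * s n m) := by
    simp only [hI, Finset.mem_filter, Finset.mem_univ, true_and]
    constructor
    · exact hab
    · rw [hmulap, hmulap, Equiv.swap_apply_left, Equiv.swap_apply_right]
      rw [Fin.lt_def]; exact hval
  have habnI : (a, bb) ∉ I w := by
    simp only [hI, Finset.mem_filter, Finset.mem_univ, true_and]
    rintro ⟨-, h2⟩
    rw [Fin.lt_def] at h2; omega
  have hcard : ((I (w * s n m)).erase (a, bb)).card = ((I w).erase (a, bb)).card := by
    apply Finset.card_bij' (i := fun pq _ => (Equiv.swap a bb pq.1, Equiv.swap a bb pq.2))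
      (j := fun pq _ => (Equiv.swap a bb pq.1, Equiv.swap a bb pq.2))
    · intro pq hpq
      simp only [Finset.mem_erase, hI, Finset.mem_filter, Finset.mem_univ, true_and] at hpq ⊢
      obtain ⟨hne, h1, h2⟩ := hpq
      have hne' : ¬(pq.1 = a ∧ pq.2 = bb) := by
        intro hc; exact hne (by rw [Prod.ext_iff]; exact hc)
      refine ⟨?_, swap_mono hm1 hm2 pq.1 pq.2 h1 hne', ?_⟩
      · intro hc
        rw [Prod.ext_iff] at hc
        have e1 : pq.1 = bb := by
          have := congrArg (Equiv.swap a bb) hc.1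
          simpa [Equiv.swap_apply_self, Equiv.swap_apply_left] using this
        have e2 : pq.2 = a := by
          have := congrArg (Equiv.swap a bb) hc.2
          simpa [Equiv.swap_apply_self, Equiv.swap_apply_right] using this
        rw [e1, e2] at h1
        exact absurd (h1.trans hab) (lt_irrefl _)
      · rw [hmulap, hmulap] at h2; exact h2
    · intro pq hpq
      simp only [Finset.mem_erase, hI, Finset.mem_filter, Finset.mem_univ, true_and] at hpq ⊢
      obtain ⟨hne, h1, h2⟩ := hpq
      have hne' : ¬(pq.1 = a ∧ pq.2 = bb) := by
        intro hc; exact hne (by rw [Prod.ext_iff]; exact hc)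
      refine ⟨?_, swap_mono hm1 hm2 pq.1 pq.2 h1 hne', ?_⟩
      · intro hc
        rw [Prod.ext_iff] at hc
        have e1 : pq.1 = bb := by
          have := congrArg (Equiv.swap a bb) hc.1
          simpa [Equiv.swap_apply_self, Equiv.swap_apply_left] using this
        have e2 : pq.2 = a := by
          have := congrArg (Equiv.swap a bb) hc.2
          simpa [Equiv.swap_apply_self, Equiv.swap_apply_right] using this
        rw [e1, e2] at h1
        exact absurd (h1.trans hab) (lt_irrefl _)
      · rw [hmulap, hmulap, Equiv.swap_apply_self, Equiv.swap_apply_self]; exact h2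
    · intro pq h; simp [Equiv.swap_apply_self]
    · intro pq h; simp [Equiv.swap_apply_self]
  have e1 : (I (w * s n m)).card = ((I (w * s n m)).erase (a, bb)).card + 1 :=
    (Finset.card_erase_add_one habI).symm
  have e2 : (I w).erase (a, bb) = I w := Finset.erase_eq_of_notMem habnI
  rw [hlen, hlen, e1, hcard, e2]

-- Section D: descent characterization
lemma s_apply_left {n m : ℕ} (hm1 : 1 ≤ m) (hm2 : m < n) :
    s n m (⟨m - 1, by omega⟩ : Fin n) = ⟨m, hm2⟩ := by
  rw [s_eq_swap hm1 hm2, Equiv.swap_apply_left]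

lemma s_apply_right {n m : ℕ} (hm1 : 1 ≤ m) (hm2 : m < n) :
    s n m (⟨m, hm2⟩ : Fin n) = ⟨m - 1, by omega⟩ := by
  rw [s_eq_swap hm1 hm2, Equiv.swap_apply_right]

lemma isRightDescent_iff {n m : ℕ} (w : Equiv.Perm (Fin n)) (hm1 : 1 ≤ m) (hm2 : m < n) :
    IsRightDescent w m ↔ pv w m < pv w (m - 1) := by
  have hne : pv w (m - 1) ≠ pv w m := by
    intro hc
    have := pv_inj w (show m - 1 < n by omega) hm2 hc
    omega
  constructor
  · rintro ⟨-, -, hlt⟩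
    rcases lt_or_gt_of_ne hne with hlt' | hgt
    · rw [len_mul_s w hm1 hm2 hlt'] at hlt; omega
    · exact hgt
  · intro hlt
    refine ⟨hm1, by omega, ?_⟩
    set w' := w * s n m with hw'
    have h1 : w' * s n m = w := by
      rw [hw', mul_assoc, s_mul_s, mul_one]
    have h2 : pv w' (m - 1) < pv w' m := by
      rw [pv_apply w' (show m - 1 < n by omega), pv_apply w' hm2]
      show ((w (s n m ⟨m - 1, by omega⟩) : Fin n) : ℕ) < ((w (s n m ⟨m, hm2⟩) : Fin n) : ℕ)
      rw [s_apply_left hm1 hm2, s_apply_right hm1 hm2]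
      rw [pv_apply w (show m - 1 < n by omega), pv_apply w hm2] at hlt
      exact hlt
    have := len_mul_s w' hm1 hm2 h2
    rw [h1] at this
    omega

lemma isLeftDescent_iff_inv {n m : ℕ} (w : Equiv.Perm (Fin n)) :
    IsLeftDescent w m ↔ IsRightDescent w⁻¹ m := by
  unfold IsLeftDescent IsRightDescent
  have h1 : len (s n m * w) = len (w⁻¹ * s n m) := by
    rw [← len_inv (w⁻¹ * s n m)]
    congr 1
    rw [mul_inv_rev, inv_inv, s_inv]
  rw [h1, len_inv]

lemma isLeftDescent_iff {n m : ℕ} (w : Equiv.Perm (Fin n)) (hm1 : 1 ≤ m) (hm2 : m < n) :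
    IsLeftDescent w m ↔ pv w⁻¹ m < pv w⁻¹ (m - 1) := by
  rw [isLeftDescent_iff_inv, isRightDescent_iff w⁻¹ hm1 hm2]

-- Section E: chain lemma
lemma chain (g : ℕ → ℕ) (a c : ℕ) (hg : ∀ r, a ≤ r → r + 1 ≤ c → g r < g (r + 1)) :
    ∀ u t, a ≤ t → t ≤ u → u ≤ c → g t + (u - t) ≤ g u := by
  intro u
  induction u with
  | zero =>
    intro t h1 h2 h3
    have ht : t = 0 := by omega
    subst ht; simp
  | succ v ih =>
    intro t h1 h2 h3
    rcases Nat.eq_or_lt_of_le h2 with he | hlt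
    · subst he; simp
    · have h4 : t ≤ v := by omega
      have h5 := ih t h1 h4 (by omega)
      have h6 := hg v (by omega) (by omega)
      omega

-- Section F: pointwise values
lemma pv_mul {n : ℕ} (u v : Equiv.Perm (Fin n)) (x : ℕ) :
    pv (u * v) x = pv u (pv v x) := by
  by_cases hx : x < n
  · rw [pv_apply v hx, pv_apply (u * v) hx, pv_apply u (v ⟨x, hx⟩).isLt]
    rfl
  · simp [pv, hx]

lemma ef_ge {lo p hi x : ℕ} (h : hi < x) (h2 : p ≤ hi) : ef lo p hi x = x := by
  unfold ef; split_ifs <;> omega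

lemma s_pv {n m : ℕ} (hm1 : 1 ≤ m) (hm2 : m < n) (x : ℕ) :
    pv (s n m) x = ef (m - 1) (m - 1) m x := by
  by_cases hx : x < n
  · rw [pv_apply _ hx, s_eq_swap hm1 hm2, Equiv.swap_apply_def]
    unfold ef
    split_ifs <;> simp_all [Fin.ext_iff] <;> omega
  · rw [ef_ge (by omega) (by omega)]; simp [pv, hx]

lemma ascRun_nil {n a bb : ℕ} (h : bb + 1 ≤ a) : ascRun n a bb = 1 := by
  unfold ascRun
  rw [Nat.sub_eq_zero_of_le h]
  simp

lemma ascRun_succ {n a bb : ℕ} (h1 : 1 ≤ a) (h : a ≤ bb) :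
    ascRun n a bb = ascRun n a (bb - 1) * s n bb := by
  unfold ascRun
  have e1 : bb + 1 - a = (bb - a) + 1 := by omega
  have e2 : (bb - 1) + 1 - a = bb - a := by omega
  have e3 : a + (bb - a) = bb := by omega
  rw [e1, e2, List.range_succ, List.map_append, List.prod_append, List.map_singleton,
    List.prod_singleton, e3]

lemma ef_comp1 {a bb x : ℕ} (h1 : 1 ≤ a) (h2 : a ≤ bb) :
    ef (a - 1) (bb - 1) bb (ef bb bb (bb + 1) x) = ef (a - 1) bb (bb + 1) x := by
  unfold ef; split_ifs <;> omega

lemma ascRun_pv {n : ℕ} : ∀ bb a x, 1 ≤ a → a ≤ bb → bb + 1 ≤ n →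
    pv (ascRun n a bb) x = ef (a - 1) (bb - 1) bb x := by
  intro bb
  induction bb with
  | zero => intro a x h1 h2 h3; omega
  | succ bb ih =>
    intro a x h1 h2 h3
    rcases Nat.eq_or_lt_of_le h2 with he | hlt
    · -- a = bb + 1 : single transposition
      have e : ascRun n a (bb + 1) = s n a := by
        rw [ascRun_succ h1 h2, ← he]
        rw [show a - 1 = a - 1 from rfl]
        rw [ascRun_nil (by omega), one_mul]
      rw [e, ← he, s_pv h1 (by omega)]
    · have ha : a ≤ bb := by omega
      rw [ascRun_succ h1 h2]
      have e4 : bb + 1 - 1 = bb := by omega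
      rw [e4, pv_mul, s_pv (by omega) (by omega), ih a _ h1 ha (by omega)]
      exact ef_comp1 h1 ha

lemma bAux_zero {n i j : ℕ} : bAux n i j 0 = ascRun n i j := by
  unfold bAux
  rw [List.range_succ, List.range_zero, List.nil_append, List.map_singleton,
    List.prod_singleton]
  congr 1 <;> omega

lemma bAux_succ {n i j k : ℕ} :
    bAux n i j (k + 1) = ascRun n i (j + k + 1) * bAux n (i - 1) j k := by
  unfold bAux
  rw [List.range_succ_eq_map, List.map_cons, List.prod_cons, List.map_map]
  have h1 : i - 0 = i := by omega
  have h2 : j + (k + 1) - 0 = j + k + 1 := by omega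
  rw [h1, h2]
  congr 1
  apply congrArg List.prod
  apply List.map_congr_left
  intro a ha
  simp only [Function.comp_apply, Nat.succ_eq_add_one]
  congr 1 <;> omega

lemma ef_comp2 {i j k x : ℕ} (h1 : k + 2 ≤ i) (h2 : i ≤ j) :
    ef (i - 1) (j + k) (j + k + 1) (ef (i - k - 2) (j - 1) (j + k) x) =
    ef (i - k - 2) (j - 1) (j + k + 1) x := by
  unfold ef; split_ifs <;> omega

lemma bAux_pv {n : ℕ} : ∀ k i j x, k + 1 ≤ i → i ≤ j → j + k + 1 ≤ n →
    pv (bAux n i j k) x = ef (i - k - 1) (j - 1) (j + k) x := by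
  intro k
  induction k with
  | zero =>
    intro i j x h1 h2 h3
    rw [bAux_zero, ascRun_pv j i x h1 h2 (by omega)]
    congr 1 <;> omega
  | succ k ih =>
    intro i j x h1 h2 h3
    rw [bAux_succ, pv_mul, ih (i-1) j x (by omega) (by omega) (by omega),
      ascRun_pv (j + k + 1) i _ (by omega) (by omega) (by omega)]
    have e1 : i - 1 - k - 1 = i - k - 2 := by omega
    have e2 : j + k + 1 - 1 = j + k := by omega
    rw [e1, e2]
    have := ef_comp2 (i := i) (j := j) (k := k) (x := x) (by omega) h2
    rw [this]
    congr 1 <;> omega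

lemma b_pv {n i j k : ℕ} (h1 : 1 ≤ i) (h2 : i ≤ n - 1) (h3 : 1 ≤ j) (h4 : j ≤ n - 1)
    (h5 : k ≤ min (min (i - 1) (j - 1)) (min (n - 1 - i) (n - 1 - j))) (x : ℕ) :
    pv (b n i j k) x = ef (min i j - k - 1) (j - 1) (max i j + k) x := by
  have hn : 2 ≤ n := by omega
  unfold b
  split_ifs with hij
  · rw [bAux_pv k i j x (by omega) hij (by omega)]
    congr 1 <;> omega
  · push_neg at hij
    have key : ∀ y, pv (bAux n j i k) y = ef (j - k - 1) (i - 1) (i + k) y :=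
      fun y => bAux_pv k j i y (by omega) (by omega) (by omega)
    by_cases hx : x < n
    · have hpar1 : min i j - k - 1 = j - k - 1 := by omega
      have hpar2 : max i j + k = i + k := by omega
      rw [hpar1, hpar2]
      set y := ef (j - k - 1) (j - 1) (i + k) x with hy
      have hyn : y < n := ef_lt (by omega) hx
      have hxy : pv (bAux n j i k) y = x := by
        rw [key y, hy]
        exact ef_ef (by omega) (by omega) (by omega)
      exact pv_inv_eq (bAux n j i k) hyn hx hxy
    · have e1 : pv (bAux n j i k)⁻¹ x = x := by simp [pv, hx]
      rw [e1, ef_ge (by omega) (by omega)]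

-- Section G: descents of ef-shaped permutations
lemma ef_desc {lo p hi m : ℕ} (hlo : lo ≤ p) (hp : p < hi) (h1 : 1 ≤ m) :
    ef lo p hi m < ef lo p hi (m - 1) ↔ m = p + 1 := by
  unfold ef; split_ifs <;> omega

lemma pv_inv_ef {n lo p hi : ℕ} (w : Equiv.Perm (Fin n)) (hlo : lo ≤ p) (hp : p < hi)
    (hhi : hi < n) (hw : ∀ x, pv w x = ef lo p hi x) :
    ∀ x, pv w⁻¹ x = ef lo (lo + hi - p - 1) hi x := by
  intro x
  by_cases hx : x < n
  · set y := ef lo (lo + hi - p - 1) hi x with hy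
    have hyn : y < n := ef_lt hhi hx
    have hxy : pv w y = x := by
      rw [hw y, hy]
      exact ef_ef hlo hp rfl
    exact pv_inv_eq w hyn hx hxy
  · rw [ef_ge (by omega) (by omega)]
    simp [pv, hx]

lemma bigrass_of_ef {n lo p hi : ℕ} (hn : 2 ≤ n) (w : Equiv.Perm (Fin n))
    (hlo : lo ≤ p) (hp : p < hi) (hhi : hi ≤ n - 1)
    (hw : ∀ x, pv w x = ef lo p hi x) : Bigrassmannian w := by
  have hhn : hi < n := by omega
  have hwinv := pv_inv_ef w hlo hp hhn hw
  have hq1 : lo ≤ lo + hi - p - 1 := by omega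
  have hq2 : lo + hi - p - 1 < hi := by omega
  constructor
  · -- left descents: unique at lo + hi - p
    refine ⟨lo + hi - p, ?_, ?_⟩
    · show IsLeftDescent w (lo + hi - p)
      rw [isLeftDescent_iff w (by omega) (by omega)]
      rw [hwinv, hwinv]
      exact (ef_desc hq1 hq2 (by omega)).mpr (by omega)
    · intro m hm
      have hm1 := hm.1
      have hm2 := hm.2.1
      have hm3 : m < n := by omega
      rw [isLeftDescent_iff w hm1 hm3, hwinv, hwinv, ef_desc hq1 hq2 hm1] at hm
      omega
  · refine ⟨p + 1, ?_, ?_⟩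
    · show IsRightDescent w (p + 1)
      rw [isRightDescent_iff w (by omega) (by omega)]
      rw [hw, hw]
      exact (ef_desc hlo hp (by omega)).mpr rfl
    · intro m hm
      have hm1 := hm.1
      have hm2 := hm.2.1
      have hm3 : m < n := by omega
      rw [isRightDescent_iff w hm1 hm3, hw, hw, ef_desc hlo hp hm1] at hm
      omega

-- Section H: structure of permutations with unique descents
lemma pv_inv' {n : ℕ} (w : Equiv.Perm (Fin n)) {t : ℕ} (h : t < n) :
    pv w (pv w⁻¹ t) = t := by
  have := pv_inv w⁻¹ h
  rwa [inv_inv] at this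

lemma core {n p : ℕ} (w : Equiv.Perm (Fin n)) (hp : p + 1 < n)
    (hmono : ∀ t, t + 1 < n → t ≠ p → pv w t < pv w (t + 1))
    (hdesc : pv w (p + 1) < pv w p) :
    pv w (p + 1) ≤ p ∧ p + 1 ≤ pv w p ∧
    (∀ t, t < pv w (p + 1) → pv w t = t) ∧
    (∀ t, pv w p < t → pv w t = t) ∧
    (∀ t u, t ≤ u → u ≤ p → pv w t + (u - t) ≤ pv w u) ∧
    (∀ t u, p + 1 ≤ t → t ≤ u → u + 1 ≤ n → pv w t + (u - t) ≤ pv w u) := by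
  have mlow : ∀ t u, t ≤ u → u ≤ p → pv w t + (u - t) ≤ pv w u := by
    intro t u h1 h2
    exact chain (pv w) 0 p (fun r hr1 hr2 => hmono r (by omega) (by omega)) u t (by omega) h1 h2
  have mhigh : ∀ t u, p + 1 ≤ t → t ≤ u → u + 1 ≤ n → pv w t + (u - t) ≤ pv w u := by
    intro t u h1 h2 h3
    exact chain (pv w) (p + 1) (n - 1) (fun r hr1 hr2 => hmono r (by omega) (by omega))
      u t h1 h2 (by omega)
  have hub : ∀ t, p + 1 ≤ t → t < n → pv w t ≤ t := by
    intro t h1 h2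
    have h3 := mhigh t (n - 1) h1 (by omega) (by omega)
    have h4 := pv_lt w (show n - 1 < n by omega)
    omega
  have hlb : ∀ t, t ≤ p → t ≤ pv w t := by
    intro t h1
    have := mlow 0 t (by omega) h1
    omega
  have hplon : p + 1 < n := hp
  have hhi : p + 1 ≤ pv w p := by
    by_contra hc
    push_neg at hc
    have hfix : ∀ t, t ≤ p → pv w t = t := by
      intro t ht
      have h1 := mlow t p ht (le_refl p)
      have h2 := hlb t ht
      omega
    have hlop : pv w (p + 1) ≤ p := by omega
    have h5 : pv w (pv w (p + 1)) = pv w (p + 1) := hfix _ hlop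
    have h6 := pv_inj w (show pv w (p + 1) < n by omega) hp h5
    omega
  have hlo : pv w (p + 1) ≤ p := by
    have h1 := hub (p + 1) (le_refl _) hp
    by_contra hc
    push_neg at hc
    have h2 : pv w (p + 1) = p + 1 := by omega
    have hhin : pv w p < n := pv_lt w (by omega)
    have hfix : ∀ t, p + 1 ≤ t → t < n → pv w t = t := by
      intro t h3 h4
      have h5 := mhigh (p + 1) t (le_refl _) h3 (by omega)
      have h6 := hub t h3 h4
      omega
    have h6 : pv w (pv w p) = pv w p := hfix _ (by omega) hhin
    have h7 := pv_inj w hhin (by omega) h6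
    omega
  refine ⟨hlo, hhi, ?_, ?_, mlow, mhigh⟩
  · intro t
    induction t using Nat.strong_induction_on with
    | _ t ih =>
      intro ht
      have htp : t ≤ p := by omega
      have h1 : t ≤ pv w t := hlb t htp
      rcases Nat.eq_or_lt_of_le h1 with he | hlt2
      · omega
      · exfalso
        have htn : t < n := by omega
        obtain ⟨r, hr⟩ : ∃ r, r = pv w⁻¹ t := ⟨_, rfl⟩
        have hrn : r < n := by rw [hr]; exact pv_lt w⁻¹ htn
        have hrv : pv w r = t := by rw [hr]; exact pv_inv' w htn
        have hrt : t < r := by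
          rcases lt_trichotomy r t with hcc | hcc | hcc
          · have := ih r hcc (by omega)
            omega
          · rw [hcc] at hrv; omega
          · exact hcc
        rcases le_or_gt r p with hcase | hcase
        · have := mlow t r (by omega) hcase
          omega
        · have := mhigh (p + 1) r (le_refl _) (by omega) (by omega)
          omega
  · have fixhigh : ∀ d t, t < n → pv w p < t → n - t ≤ d → pv w t = t := by
      intro d
      induction d with
      | zero => intro t h1 h2 h3; omega
      | succ d ih =>
        intro t h1 h2 h3
        have h4 : pv w t ≤ t := hub t (by omega) h1
        rcases Nat.eq_or_lt_of_le h4 with he | hlt2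
        · exact he
        · exfalso
          obtain ⟨r, hr⟩ : ∃ r, r = pv w⁻¹ t := ⟨_, rfl⟩
          have hrn : r < n := by rw [hr]; exact pv_lt w⁻¹ h1
          have hrv : pv w r = t := by rw [hr]; exact pv_inv' w h1
          have hrt : r < t := by
            rcases lt_trichotomy r t with hcc | hcc | hcc
            · exact hcc
            · rw [hcc] at hrv; omega
            · have := ih r hrn (by omega) (by omega)
              omega
          rcases le_or_gt r p with hcase | hcase
          · have := mlow r p hcase (le_refl p)
            omega
          · have := hub r hcase hrn
            omega
    intro t ht
    by_cases htn : t < n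
    · exact fixhigh (n - t) t htn ht (le_refl _)
    · simp [pv, htn]

lemma classify {n p q : ℕ} (w : Equiv.Perm (Fin n)) (hp : p + 1 < n) (hq : q + 1 < n)
    (hmono : ∀ t, t + 1 < n → t ≠ p → pv w t < pv w (t + 1))
    (hdesc : pv w (p + 1) < pv w p)
    (hmonoI : ∀ t, t + 1 < n → t ≠ q → pv w⁻¹ t < pv w⁻¹ (t + 1))
    (hdescI : pv w⁻¹ (q + 1) < pv w⁻¹ q) :
    pv w (p + 1) ≤ p ∧ p + 1 ≤ pv w p ∧ pv w p < n ∧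
    (∀ x, pv w x = ef (pv w (p + 1)) p (pv w p) x) := by
  obtain ⟨c1lo, c1hi, c1a, c1d, mlow, mhigh⟩ := core w hp hmono hdesc
  obtain ⟨c2lo, c2hi, c2a, c2d, mlowI, mhighI⟩ := core w⁻¹ hq hmonoI hdescI
  have hin : pv w p < n := pv_lt w (by omega)
  have hin' : pv w⁻¹ q < n := pv_lt w⁻¹ (by omega)
  have hlon : pv w (p + 1) < n := by omega
  have hlon' : pv w⁻¹ (q + 1) < n := by omega
  -- lo = lo'
  have h1 : pv w⁻¹ (pv w (p + 1)) = p + 1 := pv_inv w hp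
  have h3 : pv w⁻¹ (q + 1) ≤ pv w (p + 1) := by
    by_contra hc
    push_neg at hc
    have := c2a _ hc
    omega
  have h4 : pv w (pv w⁻¹ (q + 1)) = q + 1 := pv_inv' w hq
  have h6 : pv w (p + 1) ≤ pv w⁻¹ (q + 1) := by
    by_contra hc
    push_neg at hc
    have := c1a _ hc
    omega
  have hloeq : pv w (p + 1) = pv w⁻¹ (q + 1) := le_antisymm h6 h3
  -- hi = hi'
  have h7 : pv w⁻¹ (pv w p) = p := pv_inv w (by omega)
  have h9 : pv w p ≤ pv w⁻¹ q := by
    by_contra hc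
    push_neg at hc
    have := c2d _ hc
    omega
  have h10 : pv w (pv w⁻¹ q) = q := pv_inv' w (by omega)
  have h12 : pv w⁻¹ q ≤ pv w p := by
    by_contra hc
    push_neg at hc
    have := c1d _ hc
    omega
  have hhieq : pv w p = pv w⁻¹ q := le_antisymm h9 h12
  -- the q equation
  have e1 : q + p + 1 ≤ pv w (p + 1) + pv w p := by
    have h13 : pv w (p + 1) ≤ q := by rw [hloeq]; exact c2lo
    have := mlowI (pv w (p + 1)) q h13 (le_refl q)
    omega
  have e2 : pv w (p + 1) + pv w p ≤ q + p + 1 := by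
    have h14 : q + 1 ≤ pv w p := by rw [hhieq]; exact c2hi
    have := mhighI (q + 1) (pv w p) (le_refl _) h14 (by omega)
    omega
  refine ⟨c1lo, c1hi, hin, ?_⟩
  intro x
  by_cases hx1 : x < pv w (p + 1)
  · rw [c1a x hx1]
    unfold ef; split_ifs <;> omega
  · by_cases hx2 : x ≤ p
    · have lb := mlow (pv w (p + 1)) x (by omega) hx2
      have ub := mlow x p hx2 (le_refl p)
      have hwlo : pv w (pv w (p + 1)) = q + 1 := by rw [hloeq]; exact h4
      unfold ef; split_ifs <;> omega
    · by_cases hx3 : x ≤ pv w p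
      · have lb := mhigh (p + 1) x (le_refl _) (by omega) (by omega)
        have ub := mhigh x (pv w p) (by omega) hx3 (by omega)
        have hwhi : pv w (pv w p) = q := by rw [hhieq]; exact h10
        unfold ef; split_ifs <;> omega
      · rw [c1d x (by omega)]
        unfold ef; split_ifs <;> omega

lemma perm_eq_of_pv {n : ℕ} (u w : Equiv.Perm (Fin n)) (h : ∀ x, pv u x = pv w x) :
    u = w := by
  apply Equiv.ext
  intro x
  have h2 := h x.val
  rw [pv_apply u x.isLt, pv_apply w x.isLt] at h2
  exact Fin.ext h2

lemma bigrass_struct {n : ℕ} (hn : 2 ≤ n) (w : Equiv.Perm (Fin n)) (hw : Bigrassmannian w) :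
    ∃ lo p hi, lo ≤ p ∧ p + 1 ≤ hi ∧ hi ≤ n - 1 ∧ (∀ x, pv w x = ef lo p hi x) := by
  obtain ⟨⟨i, hiL, hiu⟩, ⟨j, hjR, hju⟩⟩ := hw
  have hj1 : 1 ≤ j := hjR.1
  have hj2 : j < n := by have := hjR.2.1; omega
  have hi1 : 1 ≤ i := hiL.1
  have hi2 : i < n := by have := hiL.2.1; omega
  have hdesc : pv w j < pv w (j - 1) := (isRightDescent_iff w hj1 hj2).mp hjR
  have hmono : ∀ t, t + 1 < n → t ≠ j - 1 → pv w t < pv w (t + 1) := by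
    intro t ht htj
    have hne : pv w t ≠ pv w (t + 1) := fun hc => by
      have := pv_inj w (by omega) (by omega) hc; omega
    have hnd : ¬ IsRightDescent w (t + 1) := by
      intro hc
      have := hju (t + 1) hc
      omega
    rw [isRightDescent_iff w (by omega) (by omega)] at hnd
    push_neg at hnd
    have e : t + 1 - 1 = t := by omega
    rw [e] at hnd
    omega
  have hiR' : IsRightDescent w⁻¹ i := (isLeftDescent_iff_inv w).mp hiL
  have hdescI : pv w⁻¹ i < pv w⁻¹ (i - 1) := (isRightDescent_iff w⁻¹ hi1 hi2).mp hiR'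
  have hmonoI : ∀ t, t + 1 < n → t ≠ i - 1 → pv w⁻¹ t < pv w⁻¹ (t + 1) := by
    intro t ht hti
    have hne : pv w⁻¹ t ≠ pv w⁻¹ (t + 1) := fun hc => by
      have := pv_inj w⁻¹ (by omega) (by omega) hc; omega
    have hnd : ¬ IsRightDescent w⁻¹ (t + 1) := by
      intro hc
      have := hiu (t + 1) ((isLeftDescent_iff_inv w).mpr hc)
      omega
    rw [isRightDescent_iff w⁻¹ (by omega) (by omega)] at hnd
    push_neg at hnd
    have e : t + 1 - 1 = t := by omega
    rw [e] at hnd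
    omega
  have hp' : (j - 1) + 1 < n := by omega
  have hq' : (i - 1) + 1 < n := by omega
  have hd' : pv w ((j - 1) + 1) < pv w (j - 1) := by
    have e : j - 1 + 1 = j := by omega
    rw [e]; exact hdesc
  have hdI' : pv w⁻¹ ((i - 1) + 1) < pv w⁻¹ (i - 1) := by
    have e : i - 1 + 1 = i := by omega
    rw [e]; exact hdescI
  obtain ⟨c1, c2, c3, c4⟩ := classify w hp' hq' hmono hd' hmonoI hdI'
  exact ⟨pv w ((j - 1) + 1), j - 1, pv w (j - 1), c1, c2, by omega, c4⟩

lemma ef_at_p {lo p hi : ℕ} (hlo : lo ≤ p) (hp : p < hi) : ef lo p hi p = hi := by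
  unfold ef; split_ifs <;> omega

lemma ef_at_p1 {lo p hi : ℕ} (hlo : lo ≤ p) (hp : p < hi) : ef lo p hi (p + 1) = lo := by
  unfold ef; split_ifs <;> omega



lemma stmt5_maps (n : ℕ) (hn : 2 ≤ n) :
    Set.MapsTo (fun p : ℕ × ℕ × ℕ => b n p.1 p.2.1 p.2.2)
      {p : ℕ × ℕ × ℕ | 1 ≤ p.1 ∧ p.1 ≤ n - 1 ∧ 1 ≤ p.2.1 ∧ p.2.1 ≤ n - 1 ∧
      p.2.2 ≤ min (min (p.1 - 1) (p.2.1 - 1)) (min (n - 1 - p.1) (n - 1 - p.2.1))}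
      {w : Equiv.Perm (Fin n) | Bigrassmannian w} := by
  rintro ⟨i, j, k⟩ hmem
  simp only [Set.mem_setOf_eq] at hmem ⊢
  obtain ⟨h1, h2, h3, h4, h5⟩ := hmem
  have hpv := fun x => b_pv h1 h2 h3 h4 h5 x
  exact bigrass_of_ef hn _ (by omega) (by omega) (by omega) hpv


set_option maxHeartbeats 1000000 in
lemma stmt5_inj (n : ℕ) (hn : 2 ≤ n) :
    Set.InjOn (fun p : ℕ × ℕ × ℕ => b n p.1 p.2.1 p.2.2)
      {p : ℕ × ℕ × ℕ | 1 ≤ p.1 ∧ p.1 ≤ n - 1 ∧ 1 ≤ p.2.1 ∧ p.2.1 ≤ n - 1 ∧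
      p.2.2 ≤ min (min (p.1 - 1) (p.2.1 - 1)) (min (n - 1 - p.1) (n - 1 - p.2.1))} := by
  rintro ⟨i, j, k⟩ hm1 ⟨i', j', k'⟩ hm2 heq
  simp only [Set.mem_setOf_eq] at hm1 hm2
  obtain ⟨h1, h2, h3, h4, h5⟩ := hm1
  obtain ⟨h1', h2', h3', h4', h5'⟩ := hm2
  simp only at heq
  have hpv1 := fun x => b_pv h1 h2 h3 h4 h5 x
  have hpv2 := fun x => b_pv h1' h2' h3' h4' h5' x
  have hfeq : ∀ x, ef (min i j - k - 1) (j - 1) (max i j + k) x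
      = ef (min i' j' - k' - 1) (j' - 1) (max i' j' + k') x := by
    intro x
    rw [← hpv1 x, ← hpv2 x, heq]
  have hlo1 : min i j - k - 1 ≤ j - 1 := by omega
  have hp1 : j - 1 < max i j + k := by omega
  have hlo2 : min i' j' - k' - 1 ≤ j' - 1 := by omega
  have hp2 : j' - 1 < max i' j' + k' := by omega
  have hdes : ef (min i j - k - 1) (j - 1) (max i j + k) j'
      < ef (min i j - k - 1) (j - 1) (max i j + k) (j' - 1) := by
    rw [hfeq j', hfeq (j' - 1)]
    exact (ef_desc hlo2 hp2 h3').mpr (by omega)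
  have hjj : j' = j := by
    have := (ef_desc hlo1 hp1 h3').mp hdes
    omega
  have ehi : max i j + k = max i' j' + k' := by
    have u1 : ef (min i j - k - 1) (j - 1) (max i j + k) (j' - 1) = max i j + k := by
      rw [hjj]; exact ef_at_p hlo1 hp1
    have u2 : ef (min i' j' - k' - 1) (j' - 1) (max i' j' + k') (j' - 1)
        = max i' j' + k' := ef_at_p hlo2 hp2
    have h := hfeq (j' - 1)
    rw [u1, u2] at h
    exact h
  have elo : min i j - k - 1 = min i' j' - k' - 1 := by
    have u1 : ef (min i j - k - 1) (j - 1) (max i j + k) ((j' - 1) + 1)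
        = min i j - k - 1 := by rw [hjj]; exact ef_at_p1 hlo1 hp1
    have u2 : ef (min i' j' - k' - 1) (j' - 1) (max i' j' + k') ((j' - 1) + 1)
        = min i' j' - k' - 1 := ef_at_p1 hlo2 hp2
    have h := hfeq ((j' - 1) + 1)
    rw [u1, u2] at h
    exact h
  have hii : i = i' := by omega
  have hkk : k = k' := by omega
  rw [hii, ← hjj, hkk]


set_option maxHeartbeats 1000000 in

lemma stmt5_surj (n : ℕ) (hn : 2 ≤ n) :
    Set.SurjOn (fun p : ℕ × ℕ × ℕ => b n p.1 p.2.1 p.2.2)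
      {p : ℕ × ℕ × ℕ | 1 ≤ p.1 ∧ p.1 ≤ n - 1 ∧ 1 ≤ p.2.1 ∧ p.2.1 ≤ n - 1 ∧
      p.2.2 ≤ min (min (p.1 - 1) (p.2.1 - 1)) (min (n - 1 - p.1) (n - 1 - p.2.1))}
      {w : Equiv.Perm (Fin n) | Bigrassmannian w} := by
  rintro w hw
  simp only [Set.mem_setOf_eq] at hw
  obtain ⟨lo, p, hi, hlo, hhi, hhn, hf⟩ := bigrass_struct hn w hw
  obtain ⟨i0, hi0⟩ : ∃ v, v = lo + hi - p := ⟨_, rfl⟩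
  obtain ⟨k0, hk0⟩ : ∃ v, v = min (p - lo) (hi - p - 1) := ⟨_, rfl⟩
  have H : 1 ≤ i0 ∧ i0 ≤ n - 1 ∧ 1 ≤ p + 1 ∧ p + 1 ≤ n - 1 ∧
      (k0 ≤ min (min (i0 - 1) (p + 1 - 1)) (min (n - 1 - i0) (n - 1 - (p + 1)))) ∧
      min i0 (p + 1) - k0 - 1 = lo ∧ (max i0 (p + 1) + k0 = hi) ∧ p + 1 - 1 = p := by
    clear hf hw
    omega
  obtain ⟨h1, h2, h3, h4, h5, e1, e2, e3⟩ := H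
  refine ⟨(i0, p + 1, k0), ⟨h1, h2, h3, h4, h5⟩, ?_⟩
  simp only
  apply perm_eq_of_pv
  intro x
  rw [b_pv h1 h2 h3 h4 h5 x, e1, e2, e3, hf x]



theorem stmt5 (n : ℕ) (hn : 2 ≤ n) :
    Set.BijOn (fun p : ℕ × ℕ × ℕ => b n p.1 p.2.1 p.2.2)
      {p : ℕ × ℕ × ℕ | 1 ≤ p.1 ∧ p.1 ≤ n - 1 ∧ 1 ≤ p.2.1 ∧ p.2.1 ≤ n - 1 ∧
        p.2.2 ≤ min (min (p.1 - 1) (p.2.1 - 1)) (min (n - 1 - p.1) (n - 1 - p.2.1))}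
      {w : Equiv.Perm (Fin n) | Bigrassmannian w} :=
  ⟨stmt5_maps n hn, stmt5_inj n hn, stmt5_surj n hn⟩

end Paper
end

section
/- For all w, x ∈ S_n, one has w ≤ x in the Bruhat order if and only if t_w(i,j) ≤ t_x(i,j) for all 1 ≤ i, j ≤ n (equivalently, if and only if r_w(i,j) ≥ r_x(i,j) for all 1 ≤ i, j ≤ n). -/
namespace Paper

section Helpers

open Finset Equiv

variable {n : ℕ}

/-- A `Fin`-indexed, 0-based version of the rank function. -/
def Rk (w : Equiv.Perm (Fin n)) (i j : ℕ) : ℕ :=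
  (Finset.univ.filter fun k : Fin n => (k : ℕ) < i ∧ (w k : ℕ) < j).card

lemma Rk_eq_sum (w : Equiv.Perm (Fin n)) (i j : ℕ) :
    Rk w i j = ∑ k : Fin n, if (k : ℕ) < i ∧ (w k : ℕ) < j then 1 else 0 := by
  rw [Rk, Finset.card_filter]

lemma mul_swap_apply (w : Equiv.Perm (Fin n)) (p q k : Fin n) :
    (Equiv.swap (w p) (w q) * w) k = if k = p then w q else if k = q then w p else w k := by
  simp only [Equiv.Perm.mul_apply]
  split_ifs with h1 h2
  · subst h1; exact Equiv.swap_apply_left _ _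
  · subst h2; exact Equiv.swap_apply_right _ _
  · exact Equiv.swap_apply_of_ne_of_ne (fun h => h1 (w.injective h)) (fun h => h2 (w.injective h))

/-- Multiplying on the left by the swap of the values at positions `p < q` with
`w p < w q` strictly increases the length. -/
lemma len_lt_swap (w : Equiv.Perm (Fin n)) (p q : Fin n) (hpq : p < q)
    (hw : w p < w q) : len w < len (Equiv.swap (w p) (w q) * w) := by
  classical
  set t := Equiv.swap (w p) (w q) with ht
  have hqnep : q ≠ p := ne_of_gt hpq
  have htwp : (t * w) p = w q := by rw [ht, mul_swap_apply, if_pos rfl]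
  have htwq : (t * w) q = w p := by rw [ht, mul_swap_apply, if_neg hqnep, if_pos rfl]
  have htwo : ∀ k, k ≠ p → k ≠ q → (t * w) k = w k := by
    intro k h1 h2
    rw [ht, mul_swap_apply, if_neg h1, if_neg h2]
  set I : Finset (Fin n × Fin n) :=
    Finset.univ.filter (fun r : Fin n × Fin n => r.1 < r.2 ∧ w r.2 < w r.1) with hI
  set I' : Finset (Fin n × Fin n) :=
    Finset.univ.filter (fun r : Fin n × Fin n => r.1 < r.2 ∧ (t * w) r.2 < (t * w) r.1) with hI'
  have hmem : ∀ r : Fin n × Fin n, r ∈ I ↔ (r.1 < r.2 ∧ w r.2 < w r.1) := by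
    intro r; rw [hI]; simp
  have hmem' : ∀ r : Fin n × Fin n, r ∈ I' ↔ (r.1 < r.2 ∧ (t * w) r.2 < (t * w) r.1) := by
    intro r; rw [hI', Finset.mem_filter]; simp only [Finset.mem_univ, true_and]
  set φ : Fin n × Fin n → Fin n × Fin n := fun r =>
    if r.2 = p ∧ w r.1 < w q then (r.1, q)
    else if r.1 = q ∧ w p < w r.2 then (p, r.2) else r with hφ
  have hmaps : ∀ r ∈ I, φ r ∈ I' := by
    rintro ⟨k, l⟩ hr
    rw [hmem] at hr
    obtain ⟨hkl, hvw⟩ := hr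
    rw [hmem']
    simp only [hφ]
    split_ifs with h1 h2
    · obtain ⟨hlp, hkv⟩ := h1
      subst hlp
      refine ⟨lt_trans hkl hpq, ?_⟩
      rw [htwq, htwo k (ne_of_lt hkl) (ne_of_lt (lt_trans hkl hpq))]
      exact hvw
    · obtain ⟨hkq, hpl⟩ := h2
      subst hkq
      refine ⟨lt_trans hpq hkl, ?_⟩
      rw [htwp, htwo l (ne_of_gt (lt_trans hpq hkl)) (ne_of_gt hkl)]
      exact hvw
    · refine ⟨hkl, ?_⟩
      by_cases hkp : k = p
      · subst hkp
        have hlq : l ≠ q := by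
          intro h
          rw [h] at hvw
          exact absurd hvw (lt_asymm hw)
        rw [htwp, htwo l (ne_of_gt hkl) hlq]
        exact lt_trans hvw hw
      · by_cases hkq : k = q
        · subst hkq
          have hlp : l ≠ p := ne_of_gt (lt_trans hpq hkl)
          have h3 : ¬(w p < w l) := fun hc => h2 ⟨rfl, hc⟩
          have h4 : w l < w p :=
            lt_of_le_of_ne (not_lt.1 h3) (fun h => hlp (w.injective h))
          rw [htwq, htwo l hlp (ne_of_gt hkl)]
          exact h4
        · by_cases hlp : l = p
          · subst hlp
            have h3 : ¬(w k < w q) := fun hc => h1 ⟨rfl, hc⟩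
            have h4 : w q < w k :=
              lt_of_le_of_ne (not_lt.1 h3) (fun h => hkq (w.injective h.symm))
            rw [htwp, htwo k (ne_of_lt hkl) hkq]
            exact h4
          · by_cases hlq : l = q
            · subst hlq
              rw [htwq, htwo k hkp hkq]
              exact lt_trans hw hvw
            · rw [htwo k hkp hkq, htwo l hlp hlq]
              exact hvw
  set ψ : Fin n × Fin n → Fin n × Fin n := fun r =>
    if r.2 = q ∧ w p < w r.1 ∧ w r.1 < w q then (r.1, p)
    else if r.1 = p ∧ w p < w r.2 ∧ w r.2 < w q then (q, r.2) else r with hψ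
  have hinv : ∀ r ∈ I, ψ (φ r) = r := by
    rintro ⟨k, l⟩ hr
    rw [hmem] at hr
    obtain ⟨hkl, hvw⟩ := hr
    simp only at hkl hvw
    simp only [hφ]
    split_ifs with h1 h2
    · obtain ⟨hlp, hkv⟩ := h1
      simp only [hψ]
      rw [if_pos ⟨trivial, by rw [← hlp]; exact hvw, hkv⟩, hlp]
    · obtain ⟨hkq, hpl⟩ := h2
      simp only [hψ]
      have hlq : l ≠ q := by
        intro h
        rw [h, hkq] at hkl
        exact lt_irrefl q hkl
      rw [if_neg (fun h => hlq h.1),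
        if_pos ⟨trivial, hpl, by rw [← hkq]; exact hvw⟩, hkq]
    · simp only [hψ]
      have hn1 : ¬(l = q ∧ w p < w k ∧ w k < w q) := by
        rintro ⟨rfl, h2', h3'⟩
        exact absurd h3' (lt_asymm hvw)
      have hn2 : ¬(k = p ∧ w p < w l ∧ w l < w q) := by
        rintro ⟨rfl, h2', h3'⟩
        exact absurd h2' (lt_asymm hvw)
      rw [if_neg hn1, if_neg hn2]
  have hInj : Set.InjOn φ I := by
    intro a ha b hb h
    have := hinv a (Finset.mem_coe.1 ha)
    rw [← this, ← hinv b (Finset.mem_coe.1 hb), h]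
  have hnot : (p, q) ∉ I.image φ := by
    intro hmem2
    obtain ⟨r, hr, hfr⟩ := Finset.mem_image.1 hmem2
    obtain ⟨k, l⟩ := r
    rw [hmem] at hr
    obtain ⟨hkl, hvw⟩ := hr
    simp only [hφ] at hfr
    split_ifs at hfr with h1 h2
    · obtain ⟨hlp, -⟩ := h1
      have hk : k = p := congrArg Prod.fst hfr
      rw [hlp] at hkl
      rw [hk] at hkl
      exact lt_irrefl p hkl
    · obtain ⟨hkq, -⟩ := h2
      have hl : l = q := congrArg Prod.snd hfr
      rw [hkq, hl] at hkl
      exact lt_irrefl q hkl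
    · have hk : k = p := congrArg Prod.fst hfr
      have hl : l = q := congrArg Prod.snd hfr
      rw [hk, hl] at hvw
      exact absurd hvw (lt_asymm hw)
  have hpq' : (p, q) ∈ I' := by
    rw [hmem']
    exact ⟨hpq, by rw [htwq, htwp]; exact hw⟩
  have hsub : insert (p, q) (I.image φ) ⊆ I' := by
    intro r hr
    rcases Finset.mem_insert.1 hr with rfl | hr
    · exact hpq'
    · obtain ⟨a, ha, rfl⟩ := Finset.mem_image.1 hr
      exact hmaps a ha
  have hcard : (insert (p, q) (I.image φ)).card = I.card + 1 := by
    rw [Finset.card_insert_of_notMem hnot, Finset.card_image_of_injOn hInj]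
  have hle := Finset.card_le_card hsub
  rw [hcard] at hle
  have hlw : len w = I.card := by rw [hI]; rfl
  have hlw' : len (t * w) = I'.card := by rw [hI']; rfl
  omega

/-- Such a swap can only decrease rank functions. -/
lemma Rk_swap_le_Rk (w : Equiv.Perm (Fin n)) (p q : Fin n) (hpq : p < q)
    (hw : w p < w q) (i j : ℕ) : Rk (Equiv.swap (w p) (w q) * w) i j ≤ Rk w i j := by
  have hqp : q ≠ p := ne_of_gt hpq
  unfold Rk
  apply Finset.card_le_card_of_injOn (fun k => if k = q ∧ ¬((w q : ℕ) < j) then p else k)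
  · intro k hk
    simp only [Finset.mem_coe, Finset.mem_filter, Finset.mem_univ, true_and] at hk ⊢
    obtain ⟨hki, hkv⟩ := hk
    rw [mul_swap_apply] at hkv
    by_cases h : k = q ∧ ¬((w q : ℕ) < j)
    · rw [if_pos h]
      obtain ⟨rfl, hvj⟩ := h
      rw [if_neg hqp, if_pos rfl] at hkv
      exact ⟨lt_trans (Fin.lt_def.mp hpq) hki, hkv⟩
    · rw [if_neg h]
      refine ⟨hki, ?_⟩
      by_cases hkp : k = p
      · subst hkp
        rw [if_pos rfl] at hkv
        exact lt_trans (Fin.lt_def.mp hw) hkv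
      · by_cases hkq : k = q
        · subst hkq
          have : (w k : ℕ) < j := by
            by_contra hc
            exact h ⟨rfl, hc⟩
          exact this
        · rwa [if_neg hkp, if_neg hkq] at hkv
  · intro a ha b hb hab
    simp only [Finset.mem_coe, Finset.mem_filter, Finset.mem_univ, true_and] at ha hb
    simp only at hab
    split_ifs at hab with h1 h2 h2
    · rw [h1.1, h2.1]
    · -- a ↦ p, b stays; b = p impossible since then (t*w) b = w q ≥ j but b ∈ filter
      exfalso
      subst hab
      rw [mul_swap_apply, if_pos rfl] at hb
      exact h1.2 hb.2
    · exfalso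
      rw [← hab] at ha
      rw [mul_swap_apply, if_pos rfl] at ha
      exact h2.2 ha.2
    · exact hab
  
lemma rk_le_of_step {w w' : Equiv.Perm (Fin n)} (h : BruhatStep w w') (i j : ℕ) :
    Rk w' i j ≤ Rk w i j := by
  obtain ⟨a, b, hab, hw', hlen⟩ := h
  subst hw'
  suffices aux : ∀ (u v : Fin n), u < v →
      len w < len (Equiv.swap u v * w) → Rk (Equiv.swap u v * w) i j ≤ Rk w i j by
    rcases lt_or_gt_of_ne hab with h | h
    · exact aux a b h hlen
    · rw [Equiv.swap_comm] at hlen ⊢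
      exact aux b a h hlen
  intro u v huv hlen2
  have hwp : w (w⁻¹ u) = u := w.apply_symm_apply u
  have hwq : w (w⁻¹ v) = v := w.apply_symm_apply v
  rcases lt_trichotomy (w⁻¹ u) (w⁻¹ v) with hc | hc | hc
  · have := Rk_swap_le_Rk w (w⁻¹ u) (w⁻¹ v) hc (by rw [hwp, hwq]; exact huv) i j
    rwa [hwp, hwq] at this
  · exfalso
    rw [hc, hwq] at hwp
    exact (ne_of_lt huv) hwp.symm
  · exfalso
    set w' := Equiv.swap u v * w with hw'def
    have hq : w' (w⁻¹ v) = u := by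
      rw [hw'def, Equiv.Perm.mul_apply, hwq, Equiv.swap_apply_right]
    have hp : w' (w⁻¹ u) = v := by
      rw [hw'def, Equiv.Perm.mul_apply, hwp, Equiv.swap_apply_left]
    have hlt := len_lt_swap w' (w⁻¹ v) (w⁻¹ u) hc (by rw [hq, hp]; exact huv)
    rw [hq, hp, hw'def, ← mul_assoc, Equiv.swap_mul_self, one_mul, ← hw'def] at hlt
    omega

lemma rk_le_of_le {w x : Equiv.Perm (Fin n)} (h : BruhatLE w x) (i j : ℕ) :
    Rk x i j ≤ Rk w i j := by
  induction h with
  | refl => exact le_refl _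
  | tail _ hbc ih => exact le_trans (rk_le_of_step hbc i j) ih

lemma Rk_clamp (w : Equiv.Perm (Fin n)) (i j : ℕ) :
    Rk w i j = Rk w (min i n) (min j n) := by
  unfold Rk
  congr 1
  apply Finset.filter_congr
  intro k _
  have h1 := k.isLt
  have h2 := (w k).isLt
  constructor
  · rintro ⟨a, b⟩; exact ⟨by omega, by omega⟩
  · rintro ⟨a, b⟩; exact ⟨by omega, by omega⟩

/-- The first-difference lemma: under rank domination, at the first position where
`w` and `x` differ we have `w i < x i`. -/
lemma fd {w x : Equiv.Perm (Fin n)} (H : ∀ i j, Rk x i j ≤ Rk w i j) (i : Fin n)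
    (hpre : ∀ k : Fin n, k < i → w k = x k) (hne : w i ≠ x i) :
    (w i : ℕ) < (x i : ℕ) := by
  have hvne : (w i : ℕ) ≠ (x i : ℕ) := fun h => hne (Fin.val_injective h)
  by_contra hlt
  have hxi : (x i : ℕ) < (w i : ℕ) := by omega
  have hpt : ∀ k : Fin n,
      (if (k : ℕ) < (i : ℕ) + 1 ∧ (w k : ℕ) < (x i : ℕ) + 1 then 1 else 0)
        + (if k = i then 1 else 0)
      ≤ (if (k : ℕ) < (i : ℕ) + 1 ∧ (x k : ℕ) < (x i : ℕ) + 1 then 1 else 0) := by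
    intro k
    rcases Nat.lt_trichotomy (k : ℕ) (i : ℕ) with hk | hk | hk
    · have hki : k ≠ i := fun h => by rw [h] at hk; omega
      rw [hpre k (Fin.lt_def.mpr hk), if_neg hki]
      simp
    · have hki : k = i := Fin.val_injective hk
      rw [hki, if_pos rfl,
        if_neg (show ¬((i : ℕ) < (i : ℕ) + 1 ∧ (w i : ℕ) < (x i : ℕ) + 1) by omega),
        if_pos (show (i : ℕ) < (i : ℕ) + 1 ∧ (x i : ℕ) < (x i : ℕ) + 1 by omega)]
    · have hki : k ≠ i := fun h => by rw [h] at hk; omega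
      have hc : ¬((k : ℕ) < (i : ℕ) + 1) := by omega
      rw [if_neg hki, if_neg (fun h => hc h.1), if_neg (fun h => hc h.1)]
  have hsum := Finset.sum_le_sum (fun k (_ : k ∈ Finset.univ) => hpt k)
  rw [Finset.sum_add_distrib, Finset.sum_ite_eq' Finset.univ i (fun _ => 1)] at hsum
  simp only [Finset.mem_univ, if_true] at hsum
  have hH := H ((i : ℕ) + 1) ((x i : ℕ) + 1)
  rw [Rk_eq_sum, Rk_eq_sum] at hH
  omega

lemma perm_eq_of_rk_eq {w x : Equiv.Perm (Fin n)} (H1 : ∀ i j, Rk x i j ≤ Rk w i j)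
    (H2 : ∀ i j, Rk w i j ≤ Rk x i j) : w = x := by
  by_contra hne
  have hT : (Finset.univ.filter fun k : Fin n => w k ≠ x k).Nonempty := by
    by_contra h'
    apply hne
    apply Equiv.ext
    intro k
    by_contra hk
    exact h' ⟨k, Finset.mem_filter.2 ⟨Finset.mem_univ k, hk⟩⟩
  set i : Fin n := Finset.min' _ hT with hidef
  have himem : i ∈ Finset.univ.filter fun k : Fin n => w k ≠ x k := Finset.min'_mem _ hT
  have hne_i : w i ≠ x i := (Finset.mem_filter.1 himem).2
  have hpre : ∀ k : Fin n, k < i → w k = x k := by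
    intro k hk
    by_contra hc
    exact absurd (Finset.min'_le _ k (Finset.mem_filter.2 ⟨Finset.mem_univ k, hc⟩))
      (not_le.2 hk)
  have h1 := fd H1 i hpre hne_i
  have h2 := fd H2 i (fun k hk => (hpre k hk).symm) (Ne.symm hne_i)
  omega

/-- The hard direction: rank domination implies Bruhat order. -/
lemma hard (w : Equiv.Perm (Fin n)) :
    ∀ (D : ℕ) (x : Equiv.Perm (Fin n)),
      (∀ i j, Rk x i j ≤ Rk w i j) →
      (∑ p ∈ Finset.range (n+1) ×ˢ Finset.range (n+1), (Rk w p.1 p.2 - Rk x p.1 p.2)) ≤ D →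
      BruhatLE w x := by
  intro D
  induction D with
  | zero =>
    intro x H hD
    have hz : ∀ p ∈ Finset.range (n+1) ×ˢ Finset.range (n+1),
        Rk w p.1 p.2 - Rk x p.1 p.2 = 0 := by
      rw [← Finset.sum_eq_zero_iff]
      omega
    have H2 : ∀ i j, Rk w i j ≤ Rk x i j := by
      intro i j
      rw [Rk_clamp w, Rk_clamp x]
      have h := hz (min i n, min j n) (by
        rw [Finset.mem_product, Finset.mem_range, Finset.mem_range]
        constructor <;> omega)
      simp only at h
      omega
    rw [perm_eq_of_rk_eq H H2]
    exact Relation.ReflTransGen.refl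
  | succ D ih =>
    intro x H hD
    by_cases hwx : w = x
    · rw [hwx]; exact Relation.ReflTransGen.refl
    have hT : (Finset.univ.filter fun k : Fin n => w k ≠ x k).Nonempty := by
      by_contra h'
      apply hwx
      apply Equiv.ext
      intro k
      by_contra hk
      exact h' ⟨k, Finset.mem_filter.2 ⟨Finset.mem_univ k, hk⟩⟩
    set i : Fin n := Finset.min' _ hT with hidef
    have himem : i ∈ Finset.univ.filter fun k : Fin n => w k ≠ x k := by
      rw [hidef]; exact Finset.min'_mem _ hT
    have hne_i : w i ≠ x i := (Finset.mem_filter.1 himem).2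
    have hpre : ∀ k : Fin n, k < i → w k = x k := by
      intro k hk
      by_contra hc
      exact absurd (Finset.min'_le _ k (Finset.mem_filter.2 ⟨Finset.mem_univ k, hc⟩))
        (not_le.2 hk)
    have hfd : (w i : ℕ) < (x i : ℕ) := fd H i hpre hne_i
    -- choose the pivot position j
    have hJne : (Finset.univ.filter fun k : Fin n =>
        i < k ∧ (w i : ℕ) ≤ (x k : ℕ) ∧ (x k : ℕ) < (x i : ℕ)).Nonempty := by
      refine ⟨x⁻¹ (w i), Finset.mem_filter.2 ⟨Finset.mem_univ _, ?_, ?_, ?_⟩⟩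
      · have hxm : x (x⁻¹ (w i)) = w i := x.apply_symm_apply (w i)
        have hmi : x⁻¹ (w i) ≠ i := by
          intro h
          rw [h] at hxm
          exact hne_i hxm.symm
        rcases lt_or_gt_of_ne hmi with h | h
        · exfalso
          have h2 := hpre _ h
          rw [hxm] at h2
          exact hmi (w.injective h2)
        · exact h
      · rw [← Equiv.Perm.mul_apply, mul_inv_cancel, Equiv.Perm.one_apply]
      · rw [← Equiv.Perm.mul_apply, mul_inv_cancel, Equiv.Perm.one_apply]; exact hfd
    set j : Fin n := Finset.min' _ hJne with hjdef
    have hjmem : j ∈ Finset.univ.filter fun k : Fin n =>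
        i < k ∧ (w i : ℕ) ≤ (x k : ℕ) ∧ (x k : ℕ) < (x i : ℕ) := by
      rw [hjdef]; exact Finset.min'_mem _ hJne
    rw [Finset.mem_filter] at hjmem
    obtain ⟨-, hij, hwixj, hxji⟩ := hjmem
    have hijv : (i : ℕ) < (j : ℕ) := Fin.lt_def.mp hij
    have hmin : ∀ k : Fin n, i < k → (w i : ℕ) ≤ (x k : ℕ) → (x k : ℕ) < (x i : ℕ) →
        (j : ℕ) ≤ (k : ℕ) := by
      intro k h1 h2 h3
      exact Fin.le_def.mp (Finset.min'_le _ k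
        (Finset.mem_filter.2 ⟨Finset.mem_univ _, h1, h2, h3⟩))
    set x' := Equiv.swap (x i) (x j) * x with hx'def
    have hx'app : ∀ k, x' k = if k = i then x j else if k = j then x i else x k :=
      fun k => mul_swap_apply x i j k
    have hx'i : x' i = x j := by rw [hx'app i, if_pos rfl]
    have hx'j : x' j = x i := by rw [hx'app j, if_neg (ne_of_gt hij), if_pos rfl]
    have hxij : x i ≠ x j := fun h => (ne_of_lt hij) (x.injective h)
    have hswap_back : Equiv.swap (x i) (x j) * x' = x := by
      rw [hx'def, ← mul_assoc, Equiv.swap_mul_self, one_mul]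
    have hx'ij : x' i < x' j := by
      rw [hx'i, hx'j]
      exact Fin.lt_def.mpr hxji
    have hlen : len x' < len x := by
      have h := len_lt_swap x' i j hij hx'ij
      rw [hx'i, hx'j, Equiv.swap_comm, hswap_back] at h
      exact h
    have hstep : BruhatStep x' x := ⟨x i, x j, hxij, hswap_back.symm, hlen⟩
    have ha : ∀ i' j', Rk x i' j' ≤ Rk x' i' j' := by
      intro i' j'
      have h := Rk_swap_le_Rk x' i j hij hx'ij i' j'
      rw [hx'i, hx'j, Equiv.swap_comm, hswap_back] at h
      exact h
    -- strict increase at the point (i+1, x j + 1)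
    have hb : Rk x ((i : ℕ) + 1) ((x j : ℕ) + 1) + 1
        ≤ Rk x' ((i : ℕ) + 1) ((x j : ℕ) + 1) := by
      rw [Rk_eq_sum, Rk_eq_sum]
      have hpt : ∀ k : Fin n,
          (if (k : ℕ) < (i : ℕ) + 1 ∧ (x k : ℕ) < (x j : ℕ) + 1 then 1 else 0)
            + (if k = i then 1 else 0)
          ≤ (if (k : ℕ) < (i : ℕ) + 1 ∧ (x' k : ℕ) < (x j : ℕ) + 1 then 1 else 0) := by
        intro k
        rcases Nat.lt_trichotomy (k : ℕ) (i : ℕ) with hk | hk | hk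
        · have hki : k ≠ i := fun h => by rw [h] at hk; omega
          have hkj : k ≠ j := fun h => by rw [h] at hk; omega
          rw [hx'app k, if_neg hki, if_neg hkj, if_neg hki]
          simp
        · have hki : k = i := Fin.val_injective hk
          rw [hki, hx'i, if_pos rfl,
            if_neg (show ¬((i : ℕ) < (i : ℕ) + 1 ∧ (x i : ℕ) < (x j : ℕ) + 1) by omega),
            if_pos (show (i : ℕ) < (i : ℕ) + 1 ∧ (x j : ℕ) < (x j : ℕ) + 1 by omega)]
        · have hki : k ≠ i := fun h => by rw [h] at hk; omega
          have hc : ¬((k : ℕ) < (i : ℕ) + 1) := by omega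
          rw [if_neg hki, if_neg (fun h => hc h.1), if_neg (fun h => hc h.1)]
      have hsum := Finset.sum_le_sum (fun k (_ : k ∈ Finset.univ) => hpt k)
      rw [Finset.sum_add_distrib, Finset.sum_ite_eq' Finset.univ i (fun _ => 1)] at hsum
      simp only [Finset.mem_univ, if_true] at hsum
      exact hsum
    -- domination is preserved
    have hc : ∀ i' j', Rk x' i' j' ≤ Rk w i' j' := by
      intro i' j'
      by_cases hrect : (i : ℕ) < i' ∧ i' ≤ (j : ℕ) ∧ (x j : ℕ) < j' ∧ j' ≤ (x i : ℕ)
      · obtain ⟨hr1, hr2, hr3, hr4⟩ := hrect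
        have h1 : Rk x' i' j' ≤ Rk x i' j' + 1 := by
          rw [Rk_eq_sum, Rk_eq_sum]
          have hpt : ∀ k : Fin n,
              (if (k : ℕ) < i' ∧ (x' k : ℕ) < j' then 1 else 0)
              ≤ (if (k : ℕ) < i' ∧ (x k : ℕ) < j' then 1 else 0)
                + (if k = i then 1 else 0) := by
            intro k
            by_cases hki : k = i
            · rw [hki, if_pos rfl]
              split_ifs <;> omega
            · by_cases hkj : k = j
              · rw [hkj, hx'j]
                have hcf : ¬((j : ℕ) < i' ∧ (x i : ℕ) < j') := by omega
                rw [if_neg hcf]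
                exact Nat.zero_le _
              · rw [hx'app k, if_neg hki, if_neg hkj, if_neg hki]
                simp
          have hsum := Finset.sum_le_sum (fun k (_ : k ∈ Finset.univ) => hpt k)
          rw [Finset.sum_add_distrib, Finset.sum_ite_eq' Finset.univ i (fun _ => 1)] at hsum
          simp only [Finset.mem_univ, if_true] at hsum
          exact hsum
        have h2 : Rk x i' j' + 1 ≤ Rk w i' j' := by
          have hcj' : (w i : ℕ) < j' := by omega
          have hpt : ∀ k : Fin n,
              (if (k : ℕ) < i' ∧ (x k : ℕ) < j' then 1 else 0)
                + (if (k : ℕ) < i' ∧ (w k : ℕ) < (w i : ℕ) then 1 else 0)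
                + (if k = i then 1 else 0)
              ≤ (if (k : ℕ) < i' ∧ (w k : ℕ) < j' then 1 else 0)
                + (if (k : ℕ) < i' ∧ (x k : ℕ) < (w i : ℕ) then 1 else 0) := by
            intro k
            rcases Nat.lt_trichotomy (k : ℕ) (i : ℕ) with hk | hk | hk
            · have hki : k ≠ i := fun h => by rw [h] at hk; omega
              rw [hpre k (Fin.lt_def.mpr hk), if_neg hki]
              split_ifs <;> omega
            · have hki : k = i := Fin.val_injective hk
              rw [hki, if_pos rfl,
                if_neg (show ¬((i : ℕ) < i' ∧ (x i : ℕ) < j') by omega),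
                if_neg (show ¬((i : ℕ) < i' ∧ (w i : ℕ) < (w i : ℕ)) by omega),
                if_pos (show (i : ℕ) < i' ∧ (w i : ℕ) < j' from ⟨hr1, hcj'⟩),
                if_neg (show ¬((i : ℕ) < i' ∧ (x i : ℕ) < (w i : ℕ)) by omega)]
            · have hki : k ≠ i := fun h => by rw [h] at hk; omega
              rw [if_neg hki]
              by_cases hki' : (k : ℕ) < i'
              · have himp : (x k : ℕ) < j' → (x k : ℕ) < (w i : ℕ) := by
                  intro hxk
                  by_contra hcc
                  have hjk := hmin k (Fin.lt_def.mpr hk) (by omega) (by omega)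
                  omega
                split_ifs <;> omega
              · split_ifs <;> omega
          have hsum := Finset.sum_le_sum (fun k (_ : k ∈ Finset.univ) => hpt k)
          rw [Finset.sum_add_distrib, Finset.sum_add_distrib, Finset.sum_add_distrib,
            Finset.sum_ite_eq' Finset.univ i (fun _ => 1)] at hsum
          simp only [Finset.mem_univ, if_true] at hsum
          have hH := H i' ((w i : ℕ))
          rw [Rk_eq_sum, Rk_eq_sum] at hH
          rw [Rk_eq_sum, Rk_eq_sum]
          omega
        exact le_trans h1 h2
      · -- outside the rectangle: Rk x' = Rk x there
        have hle : Rk x' i' j' ≤ Rk x i' j' := by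
          by_cases hi' : i' ≤ (i : ℕ)
          · rw [Rk_eq_sum, Rk_eq_sum]
            apply Finset.sum_le_sum
            intro k _
            by_cases hki : (k : ℕ) < i'
            · have h1 : k ≠ i := fun h => by rw [h] at hki; omega
              have h2 : k ≠ j := fun h => by rw [h] at hki; omega
              rw [hx'app k, if_neg h1, if_neg h2]
            · rw [if_neg (fun h => hki h.1), if_neg (fun h => hki h.1)]
          · push_neg at hi'
            by_cases hj' : (j : ℕ) < i'
            · -- both i and j are below i': reindex by the swap
              have hσ : ∀ k, x' k = x (Equiv.swap i j k) := by
                intro k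
                rw [hx'app k]
                by_cases h1 : k = i
                · rw [h1, if_pos rfl, Equiv.swap_apply_left]
                · by_cases h2 : k = j
                  · rw [h2, if_neg (ne_of_gt hij), if_pos rfl, Equiv.swap_apply_right]
                  · rw [if_neg h1, if_neg h2, Equiv.swap_apply_of_ne_of_ne h1 h2]
              apply le_of_eq
              rw [Rk_eq_sum, Rk_eq_sum]
              calc ∑ k : Fin n, (if (k : ℕ) < i' ∧ (x' k : ℕ) < j' then 1 else 0)
                  = ∑ k : Fin n, (if ((Equiv.swap i j (Equiv.swap i j k) : Fin n) : ℕ) < i'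
                      ∧ (x (Equiv.swap i j k) : ℕ) < j' then 1 else 0) := by
                    apply Finset.sum_congr rfl
                    intro k _
                    rw [Equiv.swap_apply_self, ← hσ k]
                _ = ∑ m : Fin n, (if ((Equiv.swap i j m : Fin n) : ℕ) < i'
                      ∧ (x m : ℕ) < j' then 1 else 0) :=
                    Equiv.sum_comp (Equiv.swap i j)
                      (fun m => if ((Equiv.swap i j m : Fin n) : ℕ) < i'
                        ∧ (x m : ℕ) < j' then 1 else 0)
                _ = ∑ m : Fin n, (if (m : ℕ) < i' ∧ (x m : ℕ) < j' then 1 else 0) := by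
                    apply Finset.sum_congr rfl
                    intro m _
                    have hiff : ((Equiv.swap i j m : Fin n) : ℕ) < i' ↔ (m : ℕ) < i' := by
                      by_cases h1 : m = i
                      · rw [h1, Equiv.swap_apply_left]
                        constructor <;> intro <;> omega
                      · by_cases h2 : m = j
                        · rw [h2, Equiv.swap_apply_right]
                          constructor <;> intro <;> omega
                        · rw [Equiv.swap_apply_of_ne_of_ne h1 h2]
                    exact if_congr (and_congr_left' hiff) rfl rfl
            · -- i < i' ≤ j, and j' outside (x j, x i]
              push_neg at hj'
              have hcase : j' ≤ (x j : ℕ) ∨ (x i : ℕ) < j' := by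
                by_contra hcc
                push_neg at hcc
                exact hrect ⟨hi', hj', by omega, by omega⟩
              rw [Rk_eq_sum, Rk_eq_sum]
              apply Finset.sum_le_sum
              intro k _
              by_cases h1 : k = i
              · rw [h1, hx'i]
                rcases hcase with h | h
                · rw [if_neg (show ¬((i : ℕ) < i' ∧ (x j : ℕ) < j') by omega)]
                  exact Nat.zero_le _
                · rw [if_pos (show (i : ℕ) < i' ∧ (x i : ℕ) < j' from ⟨hi', h⟩)]
                  split_ifs <;> omega
              · by_cases h2 : k = j
                · rw [h2]
                  have hcf : ¬((j : ℕ) < i') := by omega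
                  rw [if_neg (fun h => hcf h.1), if_neg (fun h => hcf h.1)]
                · rw [hx'app k, if_neg h1, if_neg h2]
        exact le_trans hle (H i' j')
    -- the sum strictly decreases
    have hmemp : ((i : ℕ) + 1, (x j : ℕ) + 1) ∈ Finset.range (n+1) ×ˢ Finset.range (n+1) := by
      rw [Finset.mem_product, Finset.mem_range, Finset.mem_range]
      have h1 := i.isLt
      have h2 := (x j).isLt
      constructor <;> omega
    have hlt : (∑ p ∈ Finset.range (n+1) ×ˢ Finset.range (n+1),
          (Rk w p.1 p.2 - Rk x' p.1 p.2))
        < (∑ p ∈ Finset.range (n+1) ×ˢ Finset.range (n+1),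
          (Rk w p.1 p.2 - Rk x p.1 p.2)) := by
      apply Finset.sum_lt_sum
      · intro p _
        exact Nat.sub_le_sub_left (ha p.1 p.2) _
      · refine ⟨((i : ℕ) + 1, (x j : ℕ) + 1), hmemp, ?_⟩
        have h1 := hb
        have h2 := hc ((i : ℕ) + 1) ((x j : ℕ) + 1)
        simp only
        omega
    exact Relation.ReflTransGen.tail (ih x' hc (by omega)) hstep

lemma act_eq (w : Equiv.Perm (Fin n)) (k : ℕ) (h1 : 1 ≤ k) (h2 : k ≤ n) (hk : k - 1 < n) :
    act w k = (w ⟨k - 1, hk⟩ : ℕ) + 1 := by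
  unfold act
  rw [dif_pos ⟨h1, h2⟩]

lemma rnk_eq_Rk (w : Equiv.Perm (Fin n)) (i j : ℕ) (hi : i ≤ n) : rnk w i j = Rk w i j := by
  unfold rnk Rk
  refine Finset.card_bij' (fun k hk => ⟨k - 1, ?_⟩) (fun m _ => (m : ℕ) + 1) ?_ ?_ ?_ ?_
  · simp only [Finset.mem_filter, Finset.mem_Icc] at hk
    omega
  · intro a ha
    simp only [Finset.mem_filter, Finset.mem_Icc] at ha
    obtain ⟨⟨h1, h2⟩, h3⟩ := ha
    rw [act_eq w a h1 (le_trans h2 hi) (by omega)] at h3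
    refine Finset.mem_filter.2 ⟨Finset.mem_univ _, ?_, h3⟩
    show a - 1 < i
    omega
  · intro m hm
    simp only [Finset.mem_filter, Finset.mem_univ, true_and] at hm
    obtain ⟨h1, h2⟩ := hm
    have hmn := m.isLt
    show ((m : ℕ) + 1) ∈ (Finset.Icc 1 i).filter (fun k => act w k ≤ j)
    refine Finset.mem_filter.2 ⟨Finset.mem_Icc.2 ⟨by omega, by omega⟩, ?_⟩
    rw [act_eq w ((m : ℕ) + 1) (by omega) (by omega) (by omega)]
    exact h2
  · intro a ha
    simp only [Finset.mem_filter, Finset.mem_Icc] at ha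
    show a - 1 + 1 = a
    omega
  · intro m _
    apply Fin.ext
    show (m : ℕ) + 1 - 1 = (m : ℕ)
    omega

lemma rnk_le_min (w : Equiv.Perm (Fin n)) (i j : ℕ) (hi : i ≤ n) :
    rnk w i j ≤ min i j := by
  refine le_min ?_ ?_
  · calc rnk w i j ≤ (Finset.Icc 1 i).card := Finset.card_filter_le _ _
    _ = i := by rw [Nat.card_Icc]; omega
  · rw [rnk_eq_Rk w i j hi]
    unfold Rk
    refine le_trans (Finset.card_le_card_of_injOn (fun k => (w k : ℕ)) ?_ ?_)
      (le_of_eq (Finset.card_range j))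
    · intro k hk
      simp only [Finset.mem_coe, Finset.mem_filter, Finset.mem_univ, true_and] at hk
      exact Finset.mem_range.2 hk.2
    · intro a _ b _ h
      exact w.injective (Fin.val_injective h)

end Helpers

theorem stmt8 (n : ℕ) (w x : Equiv.Perm (Fin n)) :
    (BruhatLE w x ↔
      ∀ i j : ℕ, 1 ≤ i → i ≤ n → 1 ≤ j → j ≤ n → cork w i j ≤ cork x i j) ∧
    (BruhatLE w x ↔
      ∀ i j : ℕ, 1 ≤ i → i ≤ n → 1 ≤ j → j ≤ n → rnk x i j ≤ rnk w i j) := by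
  have key : BruhatLE w x ↔
      ∀ i j : ℕ, 1 ≤ i → i ≤ n → 1 ≤ j → j ≤ n → rnk x i j ≤ rnk w i j := by
    constructor
    · intro h i j _ hin _ _
      rw [rnk_eq_Rk x i j hin, rnk_eq_Rk w i j hin]
      exact rk_le_of_le h i j
    · intro H
      refine hard w _ x ?_ le_rfl
      intro i j
      rw [Rk_clamp x, Rk_clamp w]
      rcases Nat.eq_zero_or_pos (min i n) with h0 | h1
      · simp [h0, Rk]
      rcases Nat.eq_zero_or_pos (min j n) with g0 | g1
      · simp [g0, Rk]
      rw [← rnk_eq_Rk x _ _ (min_le_right i n), ← rnk_eq_Rk w _ _ (min_le_right i n)]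
      exact H _ _ h1 (min_le_right i n) g1 (min_le_right j n)
  refine ⟨?_, key⟩
  rw [key]
  constructor
  · intro H i j h1 h2 h3 h4
    have hw := rnk_le_min w i j h2
    have hx := rnk_le_min x i j h2
    have := H i j h1 h2 h3 h4
    unfold cork
    omega
  · intro H i j h1 h2 h3 h4
    have hw := rnk_le_min w i j h2
    have hx := rnk_le_min x i j h2
    have := H i j h1 h2 h3 h4
    unfold cork at this
    omega

end Paper
end
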